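/- Let (R, +, ·) be a hyperring, e ∈ R, and λₑ = λ^e_× ∪ α₊. Then the quotient R/λₑ* by the transitive closure λₑ* is a ring with multiplicative identity λₑ*(e). -/
import Mathlib


/-- A hyperoperation on `H`: every pair maps to a nonempty subset. -/
structure Hyperop (H : Type*) where
  op : H → H → Set H
  op_nonempty : ∀ x y, (op x y).Nonempty

namespace Hyperop

variable {H : Type*}

/-- Extension of the hyperoperation to subsets. -/
def sop (h : Hyperop H) (A B : Set H) : Set H := ⋃ a ∈ A, ⋃ b ∈ B, h.op a b

/-- Associativity of a hyperoperation (on sets). -/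
def IsAssoc (h : Hyperop H) : Prop :=
  ∀ x y z : H, h.sop (h.op x y) {z} = h.sop {x} (h.op y z)

/-- Reproduction axiom: `x ∘ H = H ∘ x = H`. -/
def IsReproductive (h : Hyperop H) : Prop :=
  ∀ x y : H, (∃ u, y ∈ h.op x u) ∧ (∃ v, y ∈ h.op v x)

/-- A relation `T` is strongly regular (on both sides) w.r.t. `h`. -/
def StronglyRegular (h : Hyperop H) (T : H → H → Prop) : Prop :=
  ∀ x y, T x y → ∀ a : H,
    (∀ u ∈ h.op a x, ∀ v ∈ h.op a y, T u v) ∧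
    (∀ u ∈ h.op x a, ∀ v ∈ h.op y a, T u v)

/-- `h.foldl x l` : the set `x ∘ l₁ ∘ ⋯ ∘ lₖ`. -/
def foldl (h : Hyperop H) : H → List H → Set H
  | x, [] => {x}
  | x, y :: l => ⋃ z ∈ h.op x y, h.foldl z l

/-- Hyper-"product" of a nonempty list of elements (empty list gives `∅`). -/
def listProd (h : Hyperop H) : List H → Set H
  | [] => ∅
  | x :: l => h.foldl x l

/-- Fold a list of subsets onto a subset. -/
def setFold (h : Hyperop H) : Set H → List (Set H) → Set H
  | A, [] => A
  | A, B :: l => h.setFold (h.sop A B) l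

end Hyperop

/-- `l'` is obtained from `l` by inserting one consecutive block of copies of `e`
(or is equal to `l`). -/
def InsertBlock {α : Type*} (e : α) (l l' : List α) : Prop :=
  l' = l ∨ ∃ (p q : List α) (k : ℕ), 1 ≤ k ∧ l = p ++ q ∧ l' = p ++ List.replicate k e ++ q

/-- A hyperring: `(R, +)` a hypergroup, `(R, ·)` a semi-hypergroup,
with two-sided distributivity. -/
structure Hyperring (R : Type*) where
  add : Hyperop R
  mul : Hyperop R
  add_assoc : add.IsAssoc
  add_repro : add.IsReproductive
  mul_assoc : mul.IsAssoc
  left_distrib : ∀ x y z : R, mul.sop {x} (add.op y z) = add.sop (mul.op x y) (mul.op x z)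
  right_distrib : ∀ x y z : R, mul.sop (add.op y z) {x} = add.sop (mul.op y x) (mul.op z x)

namespace Hyperring

variable {R : Type*}

/-- Sum of products: `ll` is a list of lists; each inner list is multiplied,
the results are added up. -/
def SOP (S : Hyperring R) : List (List R) → Set R
  | [] => ∅
  | l :: t => S.add.setFold (S.mul.listProd l) (t.map S.mul.listProd)

/-- A valid sum-of-products expression: nonempty list of nonempty lists. -/
def ValidExpr (S : Hyperring R) (ll : List (List R)) : Prop :=
  ll ≠ [] ∧ ∀ l ∈ ll, l ≠ []

/-- The Vougiouklis relation `Γ`. -/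
def gamma (S : Hyperring R) (x y : R) : Prop :=
  ∃ ll, S.ValidExpr ll ∧ x ∈ S.SOP ll ∧ y ∈ S.SOP ll

/-- The relation `α₊` : permuting the summands. -/
def alphaPlus (S : Hyperring R) (x y : R) : Prop :=
  ∃ ll ll', S.ValidExpr ll ∧ ll.Perm ll' ∧ x ∈ S.SOP ll ∧ y ∈ S.SOP ll'

/-- The relation `α×` : permuting the factors inside each product. -/
def alphaTimes (S : Hyperring R) (x y : R) : Prop :=
  ∃ ll ll', S.ValidExpr ll ∧ List.Forall₂ List.Perm ll ll' ∧ x ∈ S.SOP ll ∧ y ∈ S.SOP ll'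

/-- The Davvaz–Vougiouklis relation `α` : permuting factors inside each
product and then permuting the summands. -/
def alpha (S : Hyperring R) (x y : R) : Prop :=
  ∃ ll mid ll', S.ValidExpr ll ∧ List.Forall₂ List.Perm ll mid ∧ mid.Perm ll' ∧
    x ∈ S.SOP ll ∧ y ∈ S.SOP ll'

/-- Condition `𝔓ₑ` : each product of the second expression is obtained from the
corresponding product of the first by inserting a block of copies of `e`. -/
def CondP (S : Hyperring R) (e : R) (ll ll' : List (List R)) : Prop :=
  List.Forall₂ (InsertBlock e) ll ll'

/-- The relation `(λ^e_×)ₘ`. -/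
def lamTimesN (S : Hyperring R) (e : R) (m : ℕ) (x y : R) : Prop :=
  ∃ ll ll', ll.length = m ∧ S.ValidExpr ll ∧ S.CondP e ll ll' ∧
    ((x ∈ S.SOP ll ∧ y ∈ S.SOP ll') ∨ (x ∈ S.SOP ll' ∧ y ∈ S.SOP ll))

/-- The relation `λ^e_×`. -/
def lamTimes (S : Hyperring R) (e : R) (x y : R) : Prop :=
  ∃ m, 1 ≤ m ∧ S.lamTimesN e m x y

/-- The relation `λₑ = λ^e_× ∪ α₊`. -/
def lam (S : Hyperring R) (e : R) (x y : R) : Prop :=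
  S.lamTimes e x y ∨ S.alphaPlus x y

/-- The relation `Λₑ = λ^e_× ∪ α`. -/
def Lam (S : Hyperring R) (e : R) (x y : R) : Prop :=
  S.lamTimes e x y ∨ S.alpha x y

/-- `M` is a `λₑ`-part. -/
def IsLamPart (S : Hyperring R) (e : R) (M : Set R) : Prop :=
  (∀ ll ll', S.ValidExpr ll → ll.Perm ll' → (S.SOP ll ∩ M).Nonempty → S.SOP ll' ⊆ M) ∧
  (∀ ll ll', S.ValidExpr ll → (S.CondP e ll ll' ∨ S.CondP e ll' ll) →
      (S.SOP ll ∩ M).Nonempty → S.SOP ll' ⊆ M)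

/-- A `λₑ`-strong hyperring. -/
def LamStrong (S : Hyperring R) (e : R) : Prop :=
  (∀ x y, Relation.TransGen (S.lam e) x y →
      (S.mul.op x e ∩ S.mul.op y e).Nonempty ∧ (S.mul.op e x ∩ S.mul.op e y).Nonempty) ∧
  (∀ x z, z ∈ S.mul.op x e → x ∈ S.mul.op z e) ∧
  (∀ x z, z ∈ S.mul.op e x → x ∈ S.mul.op e z)

end Hyperring

/-- The setoid given by the transitive (= equivalence) closure of `λₑ`. -/
def lamSetoid {R : Type*} (S : Hyperring R) (e : R) : Setoid R :=
  ⟨Relation.EqvGen (S.lam e), Relation.EqvGen.is_equivalence _⟩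

namespace Hyperop
variable {H : Type*}

theorem mem_sop {h : Hyperop H} {A B : Set H} {z : H} :
    z ∈ h.sop A B ↔ ∃ a ∈ A, ∃ b ∈ B, z ∈ h.op a b := by
  simp [sop]

theorem sop_singleton (h : Hyperop H) (x y : H) : h.sop {x} {y} = h.op x y := by
  ext z; simp [sop]

theorem sop_biUnion_left {ι : Type*} (h : Hyperop H) (s : Set ι) (f : ι → Set H) (B : Set H) :
    h.sop (⋃ i ∈ s, f i) B = ⋃ i ∈ s, h.sop (f i) B := by
  ext z; simp only [mem_sop, Set.mem_iUnion]; aesop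

theorem sop_biUnion_right {ι : Type*} (h : Hyperop H) (s : Set ι) (A : Set H) (f : ι → Set H) :
    h.sop A (⋃ i ∈ s, f i) = ⋃ i ∈ s, h.sop A (f i) := by
  ext z; simp only [mem_sop, Set.mem_iUnion]; aesop

theorem sop_eq_biUnion (h : Hyperop H) (A B : Set H) :
    h.sop A B = ⋃ a ∈ A, h.sop {a} B := by
  ext z; simp [sop]

theorem sop_assoc (h : Hyperop H) (ha : h.IsAssoc) (A B C : Set H) :
    h.sop (h.sop A B) C = h.sop A (h.sop B C) := by
  ext z
  simp only [mem_sop]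
  constructor
  · rintro ⟨w, ⟨a, haA, b, hbB, hw⟩, c, hcC, hz⟩
    have : z ∈ h.sop (h.op a b) {c} := mem_sop.2 ⟨w, hw, c, rfl, hz⟩
    rw [ha a b c] at this
    obtain ⟨a', ha', s, hs, hz'⟩ := mem_sop.1 this
    rw [Set.mem_singleton_iff] at ha'
    subst ha'
    exact ⟨a', haA, s, ⟨b, hbB, c, hcC, hs⟩, hz'⟩
  · rintro ⟨a, haA, s, ⟨b, hbB, c, hcC, hs⟩, hz⟩
    have : z ∈ h.sop {a} (h.op b c) := mem_sop.2 ⟨a, rfl, s, hs, hz⟩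
    rw [← ha a b c] at this
    obtain ⟨w, hw, c', hc', hz'⟩ := mem_sop.1 this
    rw [Set.mem_singleton_iff] at hc'
    subst hc'
    exact ⟨w, ⟨a, haA, b, hbB, hw⟩, c', hcC, hz'⟩

theorem setFold_append (h : Hyperop H) (A : Set H) (l₁ l₂ : List (Set H)) :
    h.setFold A (l₁ ++ l₂) = h.setFold (h.setFold A l₁) l₂ := by
  induction l₁ generalizing A with
  | nil => rfl
  | cons B l ih => simp only [List.cons_append, setFold]; exact ih _

theorem setFold_sop (h : Hyperop H) (ha : h.IsAssoc) (A B : Set H) (l : List (Set H)) :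
    h.setFold (h.sop A B) l = h.sop A (h.setFold B l) := by
  induction l generalizing B with
  | nil => rfl
  | cons C l ih => simp only [setFold]; rw [sop_assoc h ha, ih]

theorem foldl_cons (h : Hyperop H) (ha : h.IsAssoc) (x y : H) (l : List H) :
    h.foldl x (y :: l) = h.sop {x} (h.foldl y l) := by
  induction l generalizing x y with
  | nil =>
    show (⋃ z ∈ h.op x y, h.foldl z []) = _
    ext w; simp [foldl, sop]
  | cons c l ih =>
    show (⋃ z ∈ h.op x y, h.foldl z (c :: l)) = _
    have h1 : (⋃ z ∈ h.op x y, h.foldl z (c :: l)) = h.sop (h.op x y) (h.foldl c l) := by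
      rw [sop_eq_biUnion]
      exact Set.iUnion₂_congr fun z _ => ih z c
    rw [h1, ← sop_singleton h x y, sop_assoc h ha, ih y c]

theorem foldl_concat (h : Hyperop H) (x y : H) (l : List H) :
    h.foldl x (l ++ [y]) = h.sop (h.foldl x l) {y} := by
  induction l generalizing x with
  | nil =>
    show h.foldl x [y] = _
    ext w; simp [foldl, sop]
  | cons z l ih =>
    show (⋃ w ∈ h.op x z, h.foldl w (l ++ [y])) = h.sop (⋃ w ∈ h.op x z, h.foldl w l) {y}
    rw [sop_biUnion_left]
    exact Set.iUnion₂_congr fun w _ => ih w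

theorem listProd_cons (h : Hyperop H) (ha : h.IsAssoc) (x : H) {l : List H} (hl : l ≠ []) :
    h.listProd (x :: l) = h.sop {x} (h.listProd l) := by
  obtain ⟨y, l', rfl⟩ := List.exists_cons_of_ne_nil hl
  exact foldl_cons h ha x y l'

theorem listProd_concat (h : Hyperop H) (y : H) {l : List H} (hl : l ≠ []) :
    h.listProd (l ++ [y]) = h.sop (h.listProd l) {y} := by
  obtain ⟨x, l', rfl⟩ := List.exists_cons_of_ne_nil hl
  exact foldl_concat h x y l'

theorem listProd_single (h : Hyperop H) (x : H) : h.listProd [x] = {x} := rfl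


theorem mem_sop_singleton_left {h : Hyperop H} {a : H} {B : Set H} {z : H} :
    z ∈ h.sop {a} B ↔ ∃ b ∈ B, z ∈ h.op a b := by
  simp [sop]

theorem mem_sop_singleton_right {h : Hyperop H} {b : H} {A : Set H} {z : H} :
    z ∈ h.sop A {b} ↔ ∃ a ∈ A, z ∈ h.op a b := by
  simp [sop]

end Hyperop

namespace Hyperring
variable {R : Type*}

theorem sop_ldistrib (S : Hyperring R) (a : R) (B C : Set R) :
    S.mul.sop {a} (S.add.sop B C) = S.add.sop (S.mul.sop {a} B) (S.mul.sop {a} C) := by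
  ext z
  constructor
  · intro hz
    obtain ⟨w, hw, hz⟩ := Hyperop.mem_sop_singleton_left.1 hz
    obtain ⟨b, hb, c, hc, hw⟩ := Hyperop.mem_sop.1 hw
    have : z ∈ S.mul.sop {a} (S.add.op b c) :=
      Hyperop.mem_sop_singleton_left.2 ⟨w, hw, hz⟩
    rw [S.left_distrib] at this
    obtain ⟨u, hu, v, hv, hz'⟩ := Hyperop.mem_sop.1 this
    exact Hyperop.mem_sop.2 ⟨u, Hyperop.mem_sop_singleton_left.2 ⟨b, hb, hu⟩,
           v, Hyperop.mem_sop_singleton_left.2 ⟨c, hc, hv⟩, hz'⟩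
  · intro hz
    obtain ⟨u, hu, v, hv, hz⟩ := Hyperop.mem_sop.1 hz
    obtain ⟨b, hb, hu⟩ := Hyperop.mem_sop_singleton_left.1 hu
    obtain ⟨c, hc, hv⟩ := Hyperop.mem_sop_singleton_left.1 hv
    have : z ∈ S.add.sop (S.mul.op a b) (S.mul.op a c) := Hyperop.mem_sop.2 ⟨u, hu, v, hv, hz⟩
    rw [← S.left_distrib] at this
    obtain ⟨w, hw, hz'⟩ := Hyperop.mem_sop_singleton_left.1 this
    exact Hyperop.mem_sop_singleton_left.2 ⟨w, Hyperop.mem_sop.2 ⟨b, hb, c, hc, hw⟩, hz'⟩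

theorem sop_rdistrib (S : Hyperring R) (a : R) (B C : Set R) :
    S.mul.sop (S.add.sop B C) {a} = S.add.sop (S.mul.sop B {a}) (S.mul.sop C {a}) := by
  ext z
  constructor
  · intro hz
    obtain ⟨w, hw, hz⟩ := Hyperop.mem_sop_singleton_right.1 hz
    obtain ⟨b, hb, c, hc, hw⟩ := Hyperop.mem_sop.1 hw
    have : z ∈ S.mul.sop (S.add.op b c) {a} :=
      Hyperop.mem_sop_singleton_right.2 ⟨w, hw, hz⟩
    rw [S.right_distrib] at this
    obtain ⟨u, hu, v, hv, hz'⟩ := Hyperop.mem_sop.1 this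
    exact Hyperop.mem_sop.2 ⟨u, Hyperop.mem_sop_singleton_right.2 ⟨b, hb, hu⟩,
           v, Hyperop.mem_sop_singleton_right.2 ⟨c, hc, hv⟩, hz'⟩
  · intro hz
    obtain ⟨u, hu, v, hv, hz⟩ := Hyperop.mem_sop.1 hz
    obtain ⟨b, hb, hu⟩ := Hyperop.mem_sop_singleton_right.1 hu
    obtain ⟨c, hc, hv⟩ := Hyperop.mem_sop_singleton_right.1 hv
    have : z ∈ S.add.sop (S.mul.op b a) (S.mul.op c a) := Hyperop.mem_sop.2 ⟨u, hu, v, hv, hz⟩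
    rw [← S.right_distrib] at this
    obtain ⟨w, hw, hz'⟩ := Hyperop.mem_sop_singleton_right.1 this
    exact Hyperop.mem_sop_singleton_right.2 ⟨w, Hyperop.mem_sop.2 ⟨b, hb, c, hc, hw⟩, hz'⟩

theorem setFold_mul_left (S : Hyperring R) (a : R) (A : Set R) (l : List (Set R)) :
    S.mul.sop {a} (S.add.setFold A l) =
      S.add.setFold (S.mul.sop {a} A) (l.map (fun B => S.mul.sop {a} B)) := by
  induction l generalizing A with
  | nil => rfl
  | cons B l ih =>
    simp only [Hyperop.setFold, List.map_cons]
    rw [ih, sop_ldistrib]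

theorem setFold_mul_right (S : Hyperring R) (a : R) (A : Set R) (l : List (Set R)) :
    S.mul.sop (S.add.setFold A l) {a} =
      S.add.setFold (S.mul.sop A {a}) (l.map (fun B => S.mul.sop B {a})) := by
  induction l generalizing A with
  | nil => rfl
  | cons B l ih =>
    simp only [Hyperop.setFold, List.map_cons]
    rw [ih, sop_rdistrib]

theorem SOP_cons_single (S : Hyperring R) (a : R) {ll : List (List R)} (h : ll ≠ []) :
    S.SOP ([a] :: ll) = S.add.sop {a} (S.SOP ll) := by
  obtain ⟨l, t, rfl⟩ := List.exists_cons_of_ne_nil h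
  show S.add.setFold (S.mul.listProd [a]) ((l :: t).map S.mul.listProd) = _
  rw [Hyperop.listProd_single, List.map_cons, Hyperop.setFold,
    Hyperop.setFold_sop S.add S.add_assoc]
  rfl

theorem SOP_concat_single (S : Hyperring R) (a : R) {ll : List (List R)} (h : ll ≠ []) :
    S.SOP (ll ++ [[a]]) = S.add.sop (S.SOP ll) {a} := by
  obtain ⟨l, t, rfl⟩ := List.exists_cons_of_ne_nil h
  show S.add.setFold (S.mul.listProd l) ((t ++ [[a]]).map S.mul.listProd) = _
  rw [List.map_append, Hyperop.setFold_append]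
  show S.add.setFold (S.add.setFold _ _) [S.mul.listProd [a]] = _
  rw [Hyperop.listProd_single]
  rfl

theorem SOP_map_cons (S : Hyperring R) (a : R) {ll : List (List R)} (h : S.ValidExpr ll) :
    S.SOP (ll.map (fun l => a :: l)) = S.mul.sop {a} (S.SOP ll) := by
  obtain ⟨hne, hmem⟩ := h
  obtain ⟨l, t, rfl⟩ := List.exists_cons_of_ne_nil hne
  have hmap : (t.map (fun l => a :: l)).map S.mul.listProd
      = (t.map S.mul.listProd).map (fun B => S.mul.sop {a} B) := by
    rw [List.map_map, List.map_map]
    refine List.map_congr_left fun l' hl' => ?_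
    exact Hyperop.listProd_cons S.mul S.mul_assoc a (hmem l' (by simp [hl']))
  show S.add.setFold (S.mul.listProd (a :: l)) ((t.map (fun l => a :: l)).map S.mul.listProd)
      = S.mul.sop {a} (S.add.setFold (S.mul.listProd l) (t.map S.mul.listProd))
  rw [hmap, setFold_mul_left, Hyperop.listProd_cons S.mul S.mul_assoc a (hmem l (by simp))]

theorem SOP_map_concat (S : Hyperring R) (a : R) {ll : List (List R)} (h : S.ValidExpr ll) :
    S.SOP (ll.map (fun l => l ++ [a])) = S.mul.sop (S.SOP ll) {a} := by
  obtain ⟨hne, hmem⟩ := h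
  obtain ⟨l, t, rfl⟩ := List.exists_cons_of_ne_nil hne
  have hmap : (t.map (fun l => l ++ [a])).map S.mul.listProd
      = (t.map S.mul.listProd).map (fun B => S.mul.sop B {a}) := by
    rw [List.map_map, List.map_map]
    refine List.map_congr_left fun l' hl' => ?_
    exact Hyperop.listProd_concat S.mul a (hmem l' (by simp [hl']))
  show S.add.setFold (S.mul.listProd (l ++ [a])) ((t.map (fun l => l ++ [a])).map S.mul.listProd)
      = S.mul.sop (S.add.setFold (S.mul.listProd l) (t.map S.mul.listProd)) {a}
  rw [hmap, setFold_mul_right, Hyperop.listProd_concat S.mul a (hmem l (by simp))]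

theorem SOP_single (S : Hyperring R) (x : R) : S.SOP [[x]] = {x} := rfl

end Hyperring

section Block3
variable {R : Type*}

theorem InsertBlock.cons' {e a : R} {l l' : List R} (h : InsertBlock e l l') :
    InsertBlock e (a :: l) (a :: l') := by
  rcases h with rfl | ⟨p, q, k, hk, rfl, rfl⟩
  · exact Or.inl rfl
  · exact Or.inr ⟨a :: p, q, k, hk, rfl, by simp⟩

theorem InsertBlock.concat' {e a : R} {l l' : List R} (h : InsertBlock e l l') :
    InsertBlock e (l ++ [a]) (l' ++ [a]) := by
  rcases h with rfl | ⟨p, q, k, hk, rfl, rfl⟩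
  · exact Or.inl rfl
  · exact Or.inr ⟨p, q ++ [a], k, hk, by simp, by simp⟩

theorem InsertBlock.ne_nil {e : R} {l l' : List R} (h : InsertBlock e l l') (hl : l ≠ []) :
    l' ≠ [] := by
  rcases h with rfl | ⟨p, q, k, hk, rfl, rfl⟩
  · exact hl
  · intro h'
    have := congrArg List.length h'
    simp [List.length_append] at this
    omega

namespace Hyperring
variable (S : Hyperring R) {e : R}

theorem CondP.map_fn {ll ll' : List (List R)} (h : S.CondP e ll ll')
    (f : List R → List R) (hf : ∀ l l', InsertBlock e l l' → InsertBlock e (f l) (f l')) :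
    S.CondP e (ll.map f) (ll'.map f) := by
  have h' : List.Forall₂ (InsertBlock e) ll ll' := h
  clear h
  show List.Forall₂ (InsertBlock e) (ll.map f) (ll'.map f)
  induction h' with
  | nil => exact List.Forall₂.nil
  | cons hib _ ih => exact List.Forall₂.cons (hf _ _ hib) ih

theorem CondP.cons_pair {ll ll' : List (List R)} (h : S.CondP e ll ll') (l : List R) :
    S.CondP e (l :: ll) (l :: ll') :=
  List.Forall₂.cons (Or.inl rfl) h

theorem CondP.concat_pair {ll ll' : List (List R)} (h : S.CondP e ll ll') (l : List R) :
    S.CondP e (ll ++ [l]) (ll' ++ [l]) :=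
  List.rel_append h (List.Forall₂.cons (Or.inl rfl) List.Forall₂.nil)

theorem ValidExpr.perm {ll ll' : List (List R)} (h : S.ValidExpr ll) (hp : ll.Perm ll') :
    S.ValidExpr ll' :=
  ⟨fun hnil => h.1 (List.Perm.eq_nil (hnil ▸ hp)), fun l hl => h.2 l (hp.mem_iff.2 hl)⟩

theorem ValidExpr.of_condP {ll ll' : List (List R)} (h : S.ValidExpr ll)
    (hc : S.CondP e ll ll') : S.ValidExpr ll' := by
  constructor
  · intro hnil
    subst hnil
    exact h.1 (List.eq_nil_of_length_eq_zero (hc.length_eq.trans rfl))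
  · have h2 := h.2
    clear h
    induction hc with
    | nil => simp
    | cons hib htail ih =>
      intro l hl
      rcases List.mem_cons.1 hl with rfl | hl
      · exact hib.ne_nil (h2 _ (by simp))
      · exact ih (fun l' hl' => h2 l' (by simp [hl'])) l hl

theorem ValidExpr.cons_single (a : R) {ll : List (List R)} (h : S.ValidExpr ll) :
    S.ValidExpr ([a] :: ll) :=
  ⟨by simp, fun l hl => by rcases List.mem_cons.1 hl with rfl | hl; simp; exact h.2 l hl⟩

theorem ValidExpr.concat_single (a : R) {ll : List (List R)} (h : S.ValidExpr ll) :
    S.ValidExpr (ll ++ [[a]]) := by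
  constructor
  · simp
  · intro l hl
    rcases List.mem_append.1 hl with hl | hl
    · exact h.2 l hl
    · simp at hl; subst hl; simp

theorem ValidExpr.map_cons (a : R) {ll : List (List R)} (h : S.ValidExpr ll) :
    S.ValidExpr (ll.map (fun l => a :: l)) := by
  constructor
  · simp [h.1]
  · intro l hl
    obtain ⟨l', _, rfl⟩ := List.mem_map.1 hl
    simp

theorem ValidExpr.map_concat (a : R) {ll : List (List R)} (h : S.ValidExpr ll) :
    S.ValidExpr (ll.map (fun l => l ++ [a])) := by
  constructor
  · simp [h.1]
  · intro l hl
    obtain ⟨l', _, rfl⟩ := List.mem_map.1 hl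
    simp

theorem lam_refl (e x : R) : S.lam e x x :=
  Or.inr ⟨[[x]], [[x]], ⟨by simp, by simp⟩, List.Perm.refl _, rfl, rfl⟩

/-- Strong regularity of `lam` w.r.t. addition, at the generator level. -/
theorem lam_add_reg {e x y : R} (hxy : S.lam e x y) (a : R) :
    (∀ u ∈ S.add.op a x, ∀ v ∈ S.add.op a y, S.lam e u v) ∧
    (∀ u ∈ S.add.op x a, ∀ v ∈ S.add.op y a, S.lam e u v) := by
  have memL : ∀ (w z : R) (A : Set R), z ∈ A → ∀ u ∈ S.add.op w z, u ∈ S.add.sop {w} A :=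
    fun w z A hz u hu => Hyperop.mem_sop_singleton_left.2 ⟨z, hz, hu⟩
  have memR : ∀ (w z : R) (A : Set R), z ∈ A → ∀ u ∈ S.add.op z w, u ∈ S.add.sop A {w} :=
    fun w z A hz u hu => Hyperop.mem_sop_singleton_right.2 ⟨z, hz, hu⟩
  rcases hxy with ⟨m, hm, ll, ll', hlen, hv, hcp, hc⟩ | ⟨ll, ll', hv, hperm, hx, hy⟩
  · have hv' : S.ValidExpr ll' := hv.of_condP S hcp
    constructor
    · intro u hu v hv2
      refine Or.inl ⟨m + 1, by omega, [a] :: ll, [a] :: ll', by simp [hlen],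
        hv.cons_single S a, hcp.cons_pair S [a], ?_⟩
      rw [S.SOP_cons_single a hv.1, S.SOP_cons_single a hv'.1]
      rcases hc with ⟨hx, hy⟩ | ⟨hx, hy⟩
      · exact Or.inl ⟨memL a x _ hx u hu, memL a y _ hy v hv2⟩
      · exact Or.inr ⟨memL a x _ hx u hu, memL a y _ hy v hv2⟩
    · intro u hu v hv2
      refine Or.inl ⟨m + 1, by omega, ll ++ [[a]], ll' ++ [[a]], by simp [hlen],
        hv.concat_single S a, hcp.concat_pair S [a], ?_⟩
      rw [S.SOP_concat_single a hv.1, S.SOP_concat_single a hv'.1]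
      rcases hc with ⟨hx, hy⟩ | ⟨hx, hy⟩
      · exact Or.inl ⟨memR a x _ hx u hu, memR a y _ hy v hv2⟩
      · exact Or.inr ⟨memR a x _ hx u hu, memR a y _ hy v hv2⟩
  · have hv' : S.ValidExpr ll' := hv.perm S hperm
    constructor
    · intro u hu v hv2
      refine Or.inr ⟨[a] :: ll, [a] :: ll', hv.cons_single S a, hperm.cons [a], ?_, ?_⟩
      · rw [S.SOP_cons_single a hv.1]; exact memL a x _ hx u hu
      · rw [S.SOP_cons_single a hv'.1]; exact memL a y _ hy v hv2
    · intro u hu v hv2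
      refine Or.inr ⟨ll ++ [[a]], ll' ++ [[a]], hv.concat_single S a,
        hperm.append_right [[a]], ?_, ?_⟩
      · rw [S.SOP_concat_single a hv.1]; exact memR a x _ hx u hu
      · rw [S.SOP_concat_single a hv'.1]; exact memR a y _ hy v hv2

/-- Strong regularity of `lam` w.r.t. multiplication, at the generator level. -/
theorem lam_mul_reg {e x y : R} (hxy : S.lam e x y) (a : R) :
    (∀ u ∈ S.mul.op a x, ∀ v ∈ S.mul.op a y, S.lam e u v) ∧
    (∀ u ∈ S.mul.op x a, ∀ v ∈ S.mul.op y a, S.lam e u v) := by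
  have memL : ∀ (w z : R) (A : Set R), z ∈ A → ∀ u ∈ S.mul.op w z, u ∈ S.mul.sop {w} A :=
    fun w z A hz u hu => Hyperop.mem_sop_singleton_left.2 ⟨z, hz, hu⟩
  have memR : ∀ (w z : R) (A : Set R), z ∈ A → ∀ u ∈ S.mul.op z w, u ∈ S.mul.sop A {w} :=
    fun w z A hz u hu => Hyperop.mem_sop_singleton_right.2 ⟨z, hz, hu⟩
  rcases hxy with ⟨m, hm, ll, ll', hlen, hv, hcp, hc⟩ | ⟨ll, ll', hv, hperm, hx, hy⟩
  · have hv' : S.ValidExpr ll' := hv.of_condP S hcp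
    constructor
    · intro u hu v hv2
      refine Or.inl ⟨m, hm, ll.map (fun l => a :: l), ll'.map (fun l => a :: l),
        by simp [hlen], hv.map_cons S a,
        hcp.map_fn S _ (fun l l' h => h.cons'), ?_⟩
      rw [S.SOP_map_cons a hv, S.SOP_map_cons a hv']
      rcases hc with ⟨hx, hy⟩ | ⟨hx, hy⟩
      · exact Or.inl ⟨memL a x _ hx u hu, memL a y _ hy v hv2⟩
      · exact Or.inr ⟨memL a x _ hx u hu, memL a y _ hy v hv2⟩
    · intro u hu v hv2
      refine Or.inl ⟨m, hm, ll.map (fun l => l ++ [a]), ll'.map (fun l => l ++ [a]),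
        by simp [hlen], hv.map_concat S a,
        hcp.map_fn S _ (fun l l' h => h.concat'), ?_⟩
      rw [S.SOP_map_concat a hv, S.SOP_map_concat a hv']
      rcases hc with ⟨hx, hy⟩ | ⟨hx, hy⟩
      · exact Or.inl ⟨memR a x _ hx u hu, memR a y _ hy v hv2⟩
      · exact Or.inr ⟨memR a x _ hx u hu, memR a y _ hy v hv2⟩
  · have hv' : S.ValidExpr ll' := hv.perm S hperm
    constructor
    · intro u hu v hv2
      refine Or.inr ⟨ll.map (fun l => a :: l), ll'.map (fun l => a :: l),
        hv.map_cons S a, hperm.map _, ?_, ?_⟩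
      · rw [S.SOP_map_cons a hv]; exact memL a x _ hx u hu
      · rw [S.SOP_map_cons a hv']; exact memL a y _ hy v hv2
    · intro u hu v hv2
      refine Or.inr ⟨ll.map (fun l => l ++ [a]), ll'.map (fun l => l ++ [a]),
        hv.map_concat S a, hperm.map _, ?_, ?_⟩
      · rw [S.SOP_map_concat a hv]; exact memR a x _ hx u hu
      · rw [S.SOP_map_concat a hv']; exact memR a y _ hy v hv2

/-- Lift generator-level strong regularity to the equivalence closure. -/
theorem star_reg (e : R) (h : Hyperop R)
    (hbase : ∀ x y : R, S.lam e x y → ∀ a : R,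
      (∀ u ∈ h.op a x, ∀ v ∈ h.op a y, S.lam e u v) ∧
      (∀ u ∈ h.op x a, ∀ v ∈ h.op y a, S.lam e u v)) :
    ∀ x y : R, Relation.EqvGen (S.lam e) x y → ∀ a : R,
      (∀ u ∈ h.op a x, ∀ v ∈ h.op a y, Relation.EqvGen (S.lam e) u v) ∧
      (∀ u ∈ h.op x a, ∀ v ∈ h.op y a, Relation.EqvGen (S.lam e) u v) := by
  intro x y hxy
  induction hxy with
  | rel x y hr =>
    intro a
    exact ⟨fun u hu v hv => Relation.EqvGen.rel _ _ ((hbase x y hr a).1 u hu v hv),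
           fun u hu v hv => Relation.EqvGen.rel _ _ ((hbase x y hr a).2 u hu v hv)⟩
  | refl x =>
    intro a
    exact ⟨fun u hu v hv => Relation.EqvGen.rel _ _ ((hbase x x (S.lam_refl e x) a).1 u hu v hv),
           fun u hu v hv => Relation.EqvGen.rel _ _ ((hbase x x (S.lam_refl e x) a).2 u hu v hv)⟩
  | symm x y _ ih =>
    intro a
    exact ⟨fun u hu v hv => Relation.EqvGen.symm _ _ ((ih a).1 v hv u hu),
           fun u hu v hv => Relation.EqvGen.symm _ _ ((ih a).2 v hv u hu)⟩
  | trans x y z _ _ ih1 ih2 =>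
    intro a
    constructor
    · intro u hu v hv
      obtain ⟨w, hw⟩ := h.op_nonempty a y
      exact Relation.EqvGen.trans _ _ _ ((ih1 a).1 u hu w hw) ((ih2 a).1 w hw v hv)
    · intro u hu v hv
      obtain ⟨w, hw⟩ := h.op_nonempty y a
      exact Relation.EqvGen.trans _ _ _ ((ih1 a).2 u hu w hw) ((ih2 a).2 w hw v hv)

end Hyperring
end Block3

namespace Hyperring
variable {R : Type*}

theorem SOP_pair (S : Hyperring R) (a b : R) : S.SOP [[a, b]] = S.mul.op a b := by
  show S.add.setFold (S.mul.listProd [a, b]) [] = _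
  show S.mul.foldl a [b] = _
  ext z
  simp [Hyperop.foldl]

theorem lam_left_e (S : Hyperring R) {e x z : R} (hz : z ∈ S.mul.op e x) : S.lam e x z := by
  refine Or.inl ⟨1, le_refl 1, [[x]], [[e, x]], rfl, ⟨by simp, by simp⟩,
    List.Forall₂.cons (Or.inr ⟨[], [x], 1, le_refl 1, by simp, by simp⟩) List.Forall₂.nil,
    Or.inl ⟨rfl, ?_⟩⟩
  rw [S.SOP_pair e x]
  exact hz

theorem lam_right_e (S : Hyperring R) {e x z : R} (hz : z ∈ S.mul.op x e) : S.lam e x z := by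
  refine Or.inl ⟨1, le_refl 1, [[x]], [[x, e]], rfl, ⟨by simp, by simp⟩,
    List.Forall₂.cons (Or.inr ⟨[x], [], 1, le_refl 1, by simp, by simp⟩) List.Forall₂.nil,
    Or.inl ⟨rfl, ?_⟩⟩
  rw [S.SOP_pair x e]
  exact hz

theorem exists_quot_ops (S : Hyperring R) (e : R) :
    ∃ padd pmul : Quotient (lamSetoid S e) → Quotient (lamSetoid S e) → Quotient (lamSetoid S e),
      (∀ x y : R, ∀ z ∈ S.add.op x y,
        padd (Quotient.mk _ x) (Quotient.mk _ y) = Quotient.mk (lamSetoid S e) z) ∧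
      (∀ x y : R, ∀ z ∈ S.mul.op x y,
        pmul (Quotient.mk _ x) (Quotient.mk _ y) = Quotient.mk (lamSetoid S e) z) := by
  classical
  have addreg := S.star_reg e S.add (fun x y h a => S.lam_add_reg h a)
  have mulreg := S.star_reg e S.mul (fun x y h a => S.lam_mul_reg h a)
  have hca : ∀ x y x' y' : R, Relation.EqvGen (S.lam e) x x' → Relation.EqvGen (S.lam e) y y' →
      Relation.EqvGen (S.lam e) (S.add.op_nonempty x y).choose (S.add.op_nonempty x' y').choose := by
    intro x y x' y' hx hy
    obtain ⟨w, hw⟩ := S.add.op_nonempty x y'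
    exact Relation.EqvGen.trans _ _ _
      ((addreg y y' hy x).1 _ (S.add.op_nonempty x y).choose_spec w hw)
      ((addreg x x' hx y').2 w hw _ (S.add.op_nonempty x' y').choose_spec)
  have hcm : ∀ x y x' y' : R, Relation.EqvGen (S.lam e) x x' → Relation.EqvGen (S.lam e) y y' →
      Relation.EqvGen (S.lam e) (S.mul.op_nonempty x y).choose (S.mul.op_nonempty x' y').choose := by
    intro x y x' y' hx hy
    obtain ⟨w, hw⟩ := S.mul.op_nonempty x y'
    exact Relation.EqvGen.trans _ _ _
      ((mulreg y y' hy x).1 _ (S.mul.op_nonempty x y).choose_spec w hw)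
      ((mulreg x x' hx y').2 w hw _ (S.mul.op_nonempty x' y').choose_spec)
  refine ⟨fun a b => Quotient.liftOn₂ a b
      (fun x y => Quotient.mk (lamSetoid S e) (S.add.op_nonempty x y).choose)
      (fun x y x' y' hx hy => Quotient.sound (hca x y x' y' hx hy)),
    fun a b => Quotient.liftOn₂ a b
      (fun x y => Quotient.mk (lamSetoid S e) (S.mul.op_nonempty x y).choose)
      (fun x y x' y' hx hy => Quotient.sound (hcm x y x' y' hx hy)), ?_, ?_⟩
  · intro x y z hz
    exact Quotient.sound ((addreg y y (Relation.EqvGen.refl y) x).1 _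
      (S.add.op_nonempty x y).choose_spec z hz)
  · intro x y z hz
    exact Quotient.sound ((mulreg y y (Relation.EqvGen.refl y) x).1 _
      (S.mul.op_nonempty x y).choose_spec z hz)

end Hyperring

/-- the quotient `R/λₑ*` is a ring with multiplicative identity
the class of `e`. -/
theorem stmt11 {R : Type*} (S : Hyperring R) (e : R) :
    ∃ padd pmul : Quotient (lamSetoid S e) → Quotient (lamSetoid S e) → Quotient (lamSetoid S e),
      (∀ x y : R, ∀ z ∈ S.add.op x y,
        padd (Quotient.mk _ x) (Quotient.mk _ y) = Quotient.mk (lamSetoid S e) z) ∧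
      (∀ x y : R, ∀ z ∈ S.mul.op x y,
        pmul (Quotient.mk _ x) (Quotient.mk _ y) = Quotient.mk (lamSetoid S e) z) ∧
      (∀ a b c, padd (padd a b) c = padd a (padd b c)) ∧
      (∃ zero, (∀ a, padd zero a = a ∧ padd a zero = a) ∧
        ∀ a, ∃ b, padd a b = zero ∧ padd b a = zero) ∧
      (∀ a b c, pmul (pmul a b) c = pmul a (pmul b c)) ∧
      (∀ a b c, pmul a (padd b c) = padd (pmul a b) (pmul a c)) ∧
      (∀ a b c, pmul (padd a b) c = padd (pmul a c) (pmul b c)) ∧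
      (∀ a, pmul (Quotient.mk (lamSetoid S e) e) a = a ∧
            pmul a (Quotient.mk (lamSetoid S e) e) = a) := by
  obtain ⟨padd, pmul, Padd, Pmul⟩ := Hyperring.exists_quot_ops S e
  have hassoc : ∀ a b c, padd (padd a b) c = padd a (padd b c) := by
    intro a b c
    refine Quotient.inductionOn₃ a b c fun x y z => ?_
    obtain ⟨u, hu⟩ := S.add.op_nonempty x y
    obtain ⟨w, hw⟩ := S.add.op_nonempty u z
    have hw' : w ∈ S.add.sop {x} (S.add.op y z) := by
      rw [← S.add_assoc]
      exact Hyperop.mem_sop_singleton_right.2 ⟨u, hu, hw⟩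
    obtain ⟨s, hs, hws⟩ := Hyperop.mem_sop_singleton_left.1 hw'
    rw [Padd x y u hu, Padd u z w hw, Padd y z s hs, Padd x s w hws]
  have hmassoc : ∀ a b c, pmul (pmul a b) c = pmul a (pmul b c) := by
    intro a b c
    refine Quotient.inductionOn₃ a b c fun x y z => ?_
    obtain ⟨u, hu⟩ := S.mul.op_nonempty x y
    obtain ⟨w, hw⟩ := S.mul.op_nonempty u z
    have hw' : w ∈ S.mul.sop {x} (S.mul.op y z) := by
      rw [← S.mul_assoc]
      exact Hyperop.mem_sop_singleton_right.2 ⟨u, hu, hw⟩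
    obtain ⟨s, hs, hws⟩ := Hyperop.mem_sop_singleton_left.1 hw'
    rw [Pmul x y u hu, Pmul u z w hw, Pmul y z s hs, Pmul x s w hws]
  have solvR : ∀ a b : Quotient (lamSetoid S e), ∃ c, padd a c = b := by
    intro a b
    refine Quotient.inductionOn₂ a b fun x y => ?_
    obtain ⟨u, hu⟩ := (S.add_repro x y).1
    exact ⟨Quotient.mk _ u, Padd x u y hu⟩
  have solvL : ∀ a b : Quotient (lamSetoid S e), ∃ c, padd c a = b := by
    intro a b
    refine Quotient.inductionOn₂ a b fun x y => ?_
    obtain ⟨v, hv⟩ := (S.add_repro x y).2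
    exact ⟨Quotient.mk _ v, Padd v x y hv⟩
  obtain ⟨z0, hz0⟩ := solvR (Quotient.mk (lamSetoid S e) e) (Quotient.mk (lamSetoid S e) e)
  have hr : ∀ b, padd b z0 = b := by
    intro b
    obtain ⟨y, hy⟩ := solvL (Quotient.mk (lamSetoid S e) e) b
    rw [← hy, hassoc, hz0]
  obtain ⟨z1, hz1⟩ := solvL (Quotient.mk (lamSetoid S e) e) (Quotient.mk (lamSetoid S e) e)
  have hl1 : ∀ b, padd z1 b = b := by
    intro b
    obtain ⟨u, hu⟩ := solvR (Quotient.mk (lamSetoid S e) e) b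
    rw [← hu, ← hassoc, hz1]
  have hz10 : z1 = z0 := by
    rw [← hr z1]; exact hl1 z0
  have hl : ∀ b, padd z0 b = b := by
    intro b; rw [← hz10]; exact hl1 b
  have hzero : (∀ a, padd z0 a = a ∧ padd a z0 = a) ∧
      ∀ a, ∃ b, padd a b = z0 ∧ padd b a = z0 := by
    constructor
    · exact fun a => ⟨hl a, hr a⟩
    · intro a
      obtain ⟨b, hb⟩ := solvR a z0
      obtain ⟨c, hc⟩ := solvL a z0
      have hcb : c = b := by
        calc c = padd c z0 := (hr c).symm
        _ = padd c (padd a b) := by rw [hb]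
        _ = padd (padd c a) b := (hassoc c a b).symm
        _ = padd z0 b := by rw [hc]
        _ = b := hl b
      exact ⟨b, hb, hcb ▸ hc⟩
  have hld : ∀ a b c, pmul a (padd b c) = padd (pmul a b) (pmul a c) := by
    intro a b c
    refine Quotient.inductionOn₃ a b c fun x y z => ?_
    obtain ⟨s, hs⟩ := S.add.op_nonempty y z
    obtain ⟨t, ht⟩ := S.mul.op_nonempty x s
    have ht' : t ∈ S.add.sop (S.mul.op x y) (S.mul.op x z) := by
      rw [← S.left_distrib]
      exact Hyperop.mem_sop_singleton_left.2 ⟨s, hs, ht⟩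
    obtain ⟨u, hu, v, hv, htv⟩ := Hyperop.mem_sop.1 ht'
    rw [Padd y z s hs, Pmul x s t ht, Pmul x y u hu, Pmul x z v hv, Padd u v t htv]
  have hrd : ∀ a b c, pmul (padd a b) c = padd (pmul a c) (pmul b c) := by
    intro a b c
    refine Quotient.inductionOn₃ a b c fun x y z => ?_
    obtain ⟨s, hs⟩ := S.add.op_nonempty x y
    obtain ⟨t, ht⟩ := S.mul.op_nonempty s z
    have ht' : t ∈ S.add.sop (S.mul.op x z) (S.mul.op y z) := by
      rw [← S.right_distrib]
      exact Hyperop.mem_sop_singleton_right.2 ⟨s, hs, ht⟩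
    obtain ⟨u, hu, v, hv, htv⟩ := Hyperop.mem_sop.1 ht'
    rw [Padd x y s hs, Pmul s z t ht, Pmul x z u hu, Pmul y z v hv, Padd u v t htv]
  have hid : ∀ a, pmul (Quotient.mk (lamSetoid S e) e) a = a ∧
      pmul a (Quotient.mk (lamSetoid S e) e) = a := by
    intro a
    refine Quotient.inductionOn a fun x => ?_
    constructor
    · obtain ⟨z, hz⟩ := S.mul.op_nonempty e x
      rw [Pmul e x z hz]
      exact Quotient.sound (Relation.EqvGen.symm _ _
        (Relation.EqvGen.rel _ _ (S.lam_left_e hz)))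
    · obtain ⟨z, hz⟩ := S.mul.op_nonempty x e
      rw [Pmul x e z hz]
      exact Quotient.sound (Relation.EqvGen.symm _ _
        (Relation.EqvGen.rel _ _ (S.lam_right_e hz)))
  exact ⟨padd, pmul, Padd, Pmul, hassoc, ⟨z0, hzero.1, hzero.2⟩, hmassoc, hld, hrd, hid⟩
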